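/- For all simple ASO problems P and Q, the following conditions are equivalent: (a) P ≡^s_g Q; (b) P ≡^{s,=1}_g Q; (c) HT(P^g) = HT(Q^g) and (≥^P)_{Mod(P^g)} = (≥^Q)_{Mod(Q^g)}. -/

import Mathlib

open scoped Classical

/-- Propositional formulas over a universe `U` of atoms, built from atoms,
`⊥`, conjunction, disjunction and implication. -/
inductive Formula (U : Type) : Type where
  | atom : U → Formula U
  | bot  : Formula U
  | conj : Formula U → Formula U → Formula U
  | disj : Formula U → Formula U → Formula U
  | imp  : Formula U → Formula U → Formula U

variable {U : Type}

/-- Classical satisfaction `I ⊨ φ`. -/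
def Sat (I : Set U) : Formula U → Prop
  | .atom a => a ∈ I
  | .bot => False
  | .conj φ ψ => Sat I φ ∧ Sat I ψ
  | .disj φ ψ => Sat I φ ∨ Sat I ψ
  | .imp φ ψ => Sat I φ → Sat I ψ

/-- Classical satisfaction of a theory. -/
def SatTheory (I : Set U) (T : Set (Formula U)) : Prop := ∀ φ ∈ T, Sat I φ

/-- `Mod T`: the classical models of a theory `T`. -/
def models (T : Set (Formula U)) : Set (Set U) := {I | SatTheory I T}

/-- HT-satisfaction `⟨I, J⟩ ⊨_HT φ` (for `I ⊆ J`). -/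
def SatHT (I J : Set U) : Formula U → Prop
  | .atom a => a ∈ I
  | .bot => False
  | .conj φ ψ => SatHT I J φ ∧ SatHT I J ψ
  | .disj φ ψ => SatHT I J φ ∨ SatHT I J ψ
  | .imp φ ψ => Sat J (Formula.imp φ ψ) ∧ (¬ SatHT I J φ ∨ SatHT I J ψ)

/-- HT-satisfaction of a theory. -/
def SatHTTheory (I J : Set U) (T : Set (Formula U)) : Prop := ∀ φ ∈ T, SatHT I J φ

/-- `HT T`: the set of HT-models `⟨I,J⟩` (with `I ⊆ J`) of a theory `T`. -/
def HTmod (T : Set (Formula U)) : Set (Set U × Set U) :=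
  {p | p.1 ⊆ p.2 ∧ SatHTTheory p.1 p.2 T}

/-- `AS T`: the equilibrium models (answer sets) of a theory `T`. -/
def AS (T : Set (Formula U)) : Set (Set U) :=
  {I | SatHTTheory I I T ∧ ∀ J : Set U, J ⊂ I → ¬ SatHTTheory J I T}

/-- A ranked preference rule `φ₁ > ⋯ > φₖ ←ʲ ψ` with nonempty head and rank `j ≥ 1`. -/
structure Rule (U : Type) : Type where
  head : List (Formula U)
  body : Formula U
  rank : ℕ
  head_ne : head ≠ []
  rank_pos : 1 ≤ rank

/-- Satisfaction degree `v_I(r)`: the least (1-based) index of a satisfied head formula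
if `I` satisfies the body and some head formula; `1` otherwise. -/
noncomputable def degree (I : Set U) (r : Rule U) : ℕ :=
  if Sat I r.body ∧ ∃ φ ∈ r.head, Sat I φ then
    sInf {n : ℕ | ∃ k : Fin r.head.length, n = k.1 + 1 ∧ Sat I (r.head.get k)}
  else 1

/-- The strict preference `I >^S J` induced by a selector `S`. -/
def gtSel (S : Set (Rule U)) (I J : Set U) : Prop :=
  ∃ r' ∈ S, degree I r' < degree J r' ∧
    (∀ r ∈ S, r.rank = r'.rank → degree I r ≤ degree J r) ∧
    (∀ r ∈ S, r.rank < r'.rank → degree I r = degree J r)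

/-- The indifference `I ≈^S J` induced by a selector `S`. -/
def simSel (S : Set (Rule U)) (I J : Set U) : Prop :=
  ∀ r ∈ S, degree I r = degree J r

/-- The preference `I ≥^S J` induced by a selector `S`. -/
def geSel (S : Set (Rule U)) (I J : Set U) : Prop :=
  simSel S I J ∨ gtSel S I J

/-- An optimization problem: a generator theory plus a finite selector. -/
structure OptProblem (U : Type) : Type where
  gen : Set (Formula U)
  sel : Set (Rule U)
  sel_finite : sel.Finite

/-- Union of optimization problems. -/
def OptProblem.union (P Q : OptProblem U) : OptProblem U :=
  ⟨P.gen ∪ Q.gen, P.sel ∪ Q.sel, P.sel_finite.union Q.sel_finite⟩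

/-- `P_{<i}`: the restriction of `P` to preference rules of rank `< i`. -/
def OptProblem.below (P : OptProblem U) (i : ℕ) : OptProblem U :=
  ⟨P.gen, {r ∈ P.sel | r.rank < i}, P.sel_finite.subset (Set.sep_subset _ _)⟩

/-- The two semantics for generators: classical (CO problems) and
equilibrium-model/answer-set (ASO problems). -/
inductive Sem : Type where
  | co : Sem
  | aso : Sem

/-- `μ(P)`: the outcomes of `P` under the chosen semantics. -/
def outcomes (sem : Sem) (P : OptProblem U) : Set (Set U) :=
  match sem with
  | Sem.co => models P.gen
  | Sem.aso => AS P.gen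

/-- `π(P)`: the preferred (optimal) outcomes of `P`. -/
def pref (sem : Sem) (P : OptProblem U) : Set (Set U) :=
  {I | I ∈ outcomes sem P ∧ ¬ ∃ J ∈ outcomes sem P, gtSel P.sel J I}

/-- `diff^P(I,J)`: the largest `k` with `I ≈^{P_{<k}} J` (`∞` if this holds for all `k`). -/
noncomputable def diff (P : OptProblem U) (I J : Set U) : ℕ∞ :=
  if ∀ k : ℕ, simSel (P.below k).sel I J then ⊤
  else ((sSup {k : ℕ | simSel (P.below k).sel I J} : ℕ) : ℕ∞)

/-- Restriction `≻_V` of a relation on interpretations to a set `V` of interpretations. -/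
def restrictRel (rel : Set U → Set U → Prop) (V : Set (Set U)) : Set U → Set U → Prop :=
  fun A B => rel A B ∧ A ∈ V ∧ B ∈ V

/-- All rules of `S` have rank in the interval `[i,j]` (`j` may be `∞`). -/
def inRankInterval (i : ℕ) (j : ℕ∞) (S : Set (Rule U)) : Prop :=
  ∀ r ∈ S, i ≤ r.rank ∧ (r.rank : ℕ∞) ≤ j

/-- Strong sel-equivalence `P ≡^{s,[i,j]} Q`: same preferred outcomes under addition of any
context from `L^{s,[i,j]}` (empty generator, selector with ranks in `[i,j]`). -/
def seqv (sem : Sem) (i : ℕ) (j : ℕ∞) (P Q : OptProblem U) : Prop :=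
  ∀ R : OptProblem U, R.gen = ∅ → inRankInterval i j R.sel →
    pref sem (P.union R) = pref sem (Q.union R)

/-- Strong gen-equivalence `P ≡_g Q`: same preferred outcomes under addition of any
generator context from `L^g` (empty selector). -/
def geqv (sem : Sem) (P Q : OptProblem U) : Prop :=
  ∀ R : OptProblem U, R.sel = ∅ →
    pref sem (P.union R) = pref sem (Q.union R)

/-- Strong (combined) equivalence `P ≡^{s,[i,j]}_g Q`: same preferred outcomes under addition
of any context from `L^{[i,j]}` (arbitrary generator, selector with ranks in `[i,j]`). -/
def sgeqv (sem : Sem) (i : ℕ) (j : ℕ∞) (P Q : OptProblem U) : Prop :=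
  ∀ R : OptProblem U, inRankInterval i j R.sel →
    pref sem (P.union R) = pref sem (Q.union R)


section Stmt15Aux

variable {U : Type}

private lemma satHT_self (I : Set U) : ∀ φ : Formula U, SatHT I I φ ↔ Sat I φ
  | .atom _ => Iff.rfl
  | .bot => Iff.rfl
  | .conj φ ψ => by
      show (SatHT I I φ ∧ SatHT I I ψ) ↔ (Sat I φ ∧ Sat I ψ)
      rw [satHT_self I φ, satHT_self I ψ]
  | .disj φ ψ => by
      show (SatHT I I φ ∨ SatHT I I ψ) ↔ (Sat I φ ∨ Sat I ψ)
      rw [satHT_self I φ, satHT_self I ψ]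
  | .imp φ ψ => by
      show ((Sat I φ → Sat I ψ) ∧ (¬ SatHT I I φ ∨ SatHT I I ψ)) ↔ (Sat I φ → Sat I ψ)
      rw [satHT_self I φ, satHT_self I ψ]
      tauto

private lemma satHT_persist {I J : Set U} (hIJ : I ⊆ J) :
    ∀ φ : Formula U, SatHT I J φ → Sat J φ
  | .atom _, h => hIJ h
  | .bot, h => h.elim
  | .conj φ ψ, h => ⟨satHT_persist hIJ φ h.1, satHT_persist hIJ ψ h.2⟩
  | .disj φ ψ, h =>
      h.elim (fun h' => Or.inl (satHT_persist hIJ φ h'))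
        (fun h' => Or.inr (satHT_persist hIJ ψ h'))
  | .imp _ _, h => h.1

private lemma satTheory_union {I : Set U} {A B : Set (Formula U)} :
    SatTheory I (A ∪ B) ↔ SatTheory I A ∧ SatTheory I B := by
  simp [SatTheory, Set.mem_union, or_imp, forall_and]

private lemma satHTTheory_union {I J : Set U} {A B : Set (Formula U)} :
    SatHTTheory I J (A ∪ B) ↔ SatHTTheory I J A ∧ SatHTTheory I J B := by
  simp [SatHTTheory, Set.mem_union, or_imp, forall_and]

private lemma satHTTheory_self {I : Set U} {T : Set (Formula U)} :
    SatHTTheory I I T ↔ SatTheory I T :=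
  forall₂_congr fun φ _ => satHT_self I φ

private lemma AS_subset_models {T : Set (Formula U)} : AS T ⊆ models T :=
  fun _ hI => satHTTheory_self.mp hI.1

private lemma models_eq_of_HT {A B : Set (Formula U)} (h : HTmod A = HTmod B) :
    models A = models B := by
  ext K
  have := Set.ext_iff.mp h (K, K)
  simpa [HTmod, satHTTheory_self, models] using this

private lemma AS_union_congr {A B : Set (Formula U)} (h : HTmod A = HTmod B)
    (G : Set (Formula U)) : AS (A ∪ G) = AS (B ∪ G) := by
  have key : ∀ I J : Set U, I ⊆ J → (SatHTTheory I J A ↔ SatHTTheory I J B) := by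
    intro I J hIJ
    have := Set.ext_iff.mp h (I, J)
    simpa [HTmod, hIJ] using this
  ext I
  simp only [AS, Set.mem_setOf_eq, satHTTheory_union]
  rw [key I I (subset_refl I)]
  constructor
  · rintro ⟨h1, h2⟩
    exact ⟨h1, fun K hK hs => h2 K hK ⟨(key K I hK.subset).mpr hs.1, hs.2⟩⟩
  · rintro ⟨h1, h2⟩
    exact ⟨h1, fun K hK hs => h2 K hK ⟨(key K I hK.subset).mp hs.1, hs.2⟩⟩

end Stmt15Aux

section Stmt15Aux2

variable {U : Type}

/-- Weak (Pareto) dominance induced by a selector. -/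
private def wkSel (S : Set (Rule U)) (I J : Set U) : Prop :=
  ∀ r ∈ S, degree I r ≤ degree J r

private lemma gtSel_irrefl (S : Set (Rule U)) (I : Set U) : ¬ gtSel S I I := by
  rintro ⟨r, -, h, -, -⟩; exact lt_irrefl _ h

private lemma simSel_symm {S : Set (Rule U)} {I J : Set U} (h : simSel S I J) :
    simSel S J I := fun r hr => (h r hr).symm

private lemma simSel_not_gt {S : Set (Rule U)} {I J : Set U} (h : simSel S I J) :
    ¬ gtSel S I J := by
  rintro ⟨r, hr, hlt, -, -⟩; exact hlt.ne (h r hr)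

private lemma simSel_iff_wk {S : Set (Rule U)} {I J : Set U} :
    simSel S I J ↔ wkSel S I J ∧ wkSel S J I :=
  ⟨fun h => ⟨fun r hr => (h r hr).le, fun r hr => (h r hr).ge⟩,
   fun ⟨h1, h2⟩ r hr => le_antisymm (h1 r hr) (h2 r hr)⟩

private lemma geSel_iff_wk {S : Set (Rule U)} (hS : ∀ r ∈ S, r.rank = 1) {I J : Set U} :
    geSel S I J ↔ wkSel S I J := by
  constructor
  · rintro (hsim | ⟨r', hr', _, hle, -⟩)
    · exact fun r hr => (hsim r hr).le
    · exact fun r hr => hle r hr ((hS r hr).trans (hS r' hr').symm)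
  · intro hwk
    by_cases hsim : simSel S I J
    · exact Or.inl hsim
    · right
      simp only [simSel, not_forall] at hsim
      obtain ⟨r', hr', hne⟩ := hsim
      refine ⟨r', hr', lt_of_le_of_ne (hwk r' hr') hne, fun r hr _ => hwk r hr, ?_⟩
      intro r hr hlt
      rw [hS r hr, hS r' hr'] at hlt
      exact absurd hlt (lt_irrefl 1)

private lemma gtSel_iff_wk {S : Set (Rule U)} (hS : ∀ r ∈ S, r.rank = 1) {I J : Set U} :
    gtSel S I J ↔ wkSel S I J ∧ ¬ simSel S I J := by
  constructor
  · intro hgt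
    exact ⟨(geSel_iff_wk hS).mp (Or.inr hgt), fun hs => simSel_not_gt hs hgt⟩
  · rintro ⟨hwk, hnsim⟩
    rcases (geSel_iff_wk hS).mpr hwk with hs | hg
    · exact (hnsim hs).elim
    · exact hg

private lemma sim_iff_ge {S : Set (Rule U)} (hS : ∀ r ∈ S, r.rank = 1) {I J : Set U} :
    simSel S I J ↔ geSel S I J ∧ geSel S J I := by
  rw [simSel_iff_wk, geSel_iff_wk hS, geSel_iff_wk hS]

private lemma gt_union_transfer {SP SQ SR : Set (Rule U)}
    (hSP : ∀ r ∈ SP, r.rank = 1) (hSQ : ∀ r ∈ SQ, r.rank = 1) {I J : Set U}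
    (hsim : simSel SP I J ↔ simSel SQ I J)
    (hwk : wkSel SP I J ↔ wkSel SQ I J) :
    gtSel (SP ∪ SR) I J → gtSel (SQ ∪ SR) I J := by
  rintro ⟨r', hr', hlt, hle, heq⟩
  by_cases hrank : r'.rank = 1
  · have hwkP : wkSel SP I J := fun r hr =>
      hle r (Or.inl hr) ((hSP r hr).trans hrank.symm)
    have hwkQ := hwk.mp hwkP
    by_cases hsimQ : simSel SQ I J
    · have hsimP := hsim.mpr hsimQ
      have hr'R : r' ∈ SR := hr'.resolve_left (fun hP' => hlt.ne (hsimP r' hP'))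
      refine ⟨r', Or.inr hr'R, hlt, ?_, ?_⟩
      · rintro r (hQ' | hR') hr1
        · exact (hsimQ r hQ').le
        · exact hle r (Or.inr hR') hr1
      · rintro r (hQ' | hR') hlt2
        · exact hsimQ r hQ'
        · exact heq r (Or.inr hR') hlt2
    · have hgtQ : gtSel SQ I J := (gtSel_iff_wk hSQ).mpr ⟨hwkQ, hsimQ⟩
      obtain ⟨r'', hr'', hlt2, hle2, -⟩ := hgtQ
      refine ⟨r'', Or.inl hr'', hlt2, ?_, ?_⟩
      · rintro r (hQ' | hR') hr1
        · exact hle2 r hQ' hr1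
        · exact hle r (Or.inr hR') (by rw [hr1, hSQ r'' hr'', ← hrank])
      · rintro r (hQ' | hR') hlt3
        · rw [hSQ r hQ', hSQ r'' hr''] at hlt3
          exact absurd hlt3 (lt_irrefl 1)
        · rw [hSQ r'' hr''] at hlt3
          have := r.rank_pos
          omega
  · have hr'R : r' ∈ SR := hr'.resolve_left fun hP' => hrank (hSP r' hP')
    have hrank1 : 1 < r'.rank := lt_of_le_of_ne r'.rank_pos (Ne.symm hrank)
    have hsimP : simSel SP I J := fun r hr =>
      heq r (Or.inl hr) (by rw [hSP r hr]; exact hrank1)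
    have hsimQ := hsim.mp hsimP
    refine ⟨r', Or.inr hr'R, hlt, ?_, ?_⟩
    · rintro r (hQ' | hR') hr1
      · rw [hSQ r hQ'] at hr1
        omega
      · exact hle r (Or.inr hR') hr1
    · rintro r (hQ' | hR') hlt3
      · exact hsimQ r hQ'
      · exact heq r (Or.inr hR') hlt3

end Stmt15Aux2

section Stmt15Aux3

variable {U : Type}

/-- The simple rule `φ₁ > φ₂ ← φ₁ ∨ φ₂`. -/
private def mkRule (φ1 φ2 : Formula U) : Rule U :=
  ⟨[φ1, φ2], .disj φ1 φ2, 1, by simp, le_refl 1⟩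

private lemma degree_mkRule_one {I : Set U} {φ1 φ2 : Formula U} (h1 : Sat I φ1) :
    degree I (mkRule φ1 φ2) = 1 := by
  have hcond : Sat I (mkRule φ1 φ2).body ∧ ∃ φ ∈ (mkRule φ1 φ2).head, Sat I φ :=
    ⟨Or.inl h1, φ1, by simp [mkRule], h1⟩
  rw [degree, if_pos hcond]
  have h1mem : 1 ∈ {n : ℕ | ∃ k : Fin (mkRule φ1 φ2).head.length,
      n = k.1 + 1 ∧ Sat I ((mkRule φ1 φ2).head.get k)} :=
    ⟨⟨0, by simp [mkRule]⟩, rfl, h1⟩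
  refine le_antisymm (Nat.sInf_le h1mem) ?_
  obtain ⟨k, hk, -⟩ := Nat.sInf_mem (⟨1, h1mem⟩ : Set.Nonempty _)
  omega

private lemma degree_mkRule_two {J : Set U} {φ1 φ2 : Formula U}
    (h1 : ¬ Sat J φ1) (h2 : Sat J φ2) :
    degree J (mkRule φ1 φ2) = 2 := by
  have hcond : Sat J (mkRule φ1 φ2).body ∧ ∃ φ ∈ (mkRule φ1 φ2).head, Sat J φ :=
    ⟨Or.inr h2, φ2, by simp [mkRule], h2⟩
  rw [degree, if_pos hcond]
  have h2mem : 2 ∈ {n : ℕ | ∃ k : Fin (mkRule φ1 φ2).head.length,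
      n = k.1 + 1 ∧ Sat J ((mkRule φ1 φ2).head.get k)} :=
    ⟨⟨1, by simp [mkRule]⟩, rfl, h2⟩
  refine le_antisymm (Nat.sInf_le h2mem) ?_
  obtain ⟨k, hk, hsat⟩ := Nat.sInf_mem (⟨2, h2mem⟩ : Set.Nonempty _)
  rcases k with ⟨v, hv⟩
  cases v with
  | zero => exact absurd hsat h1
  | succ n => rw [hk]; simp

private lemma exists_sep_rule {I J : Set U} (hne : I ≠ J) :
    ∃ r : Rule U, r.rank = 1 ∧ degree I r = 1 ∧ degree J r = 2 := by
  have hex : ∃ a, (a ∈ I ∧ a ∉ J) ∨ (a ∈ J ∧ a ∉ I) := by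
    by_contra hcon
    push_neg at hcon
    exact hne (Set.ext fun a => by have := hcon a; tauto)
  obtain ⟨a, ha | ha⟩ := hex
  · refine ⟨mkRule (.atom a) (.imp (.atom a) .bot), rfl, degree_mkRule_one ha.1, ?_⟩
    exact degree_mkRule_two ha.2 ha.2
  · refine ⟨mkRule (.imp (.atom a) .bot) (.atom a), rfl, ?_, ?_⟩
    · exact degree_mkRule_one (show a ∈ I → False from fun h => (ha.2 h).elim)
    · exact degree_mkRule_two (show ¬ (a ∈ J → False) from fun h => h ha.1) ha.1

end Stmt15Aux3

section Stmt15Aux4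

variable {U : Type}

private def fneg (φ : Formula U) : Formula U := .imp φ .bot

private lemma satHT_fneg {K J : Set U} (hKJ : K ⊆ J) {φ : Formula U} :
    SatHT K J (fneg φ) ↔ ¬ Sat J φ :=
  ⟨fun h => h.1, fun h => ⟨h, Or.inl fun h' => h (satHT_persist hKJ φ h')⟩⟩

private lemma satHT_nn {K J : Set U} (hKJ : K ⊆ J) {φ : Formula U} :
    SatHT K J (fneg (fneg φ)) ↔ Sat J φ := by
  rw [satHT_fneg hKJ]
  show ¬ ¬ Sat J φ ↔ Sat J φ
  exact not_not

/-- A theory whose unique classical model is `K`, and such that `⟨K',K⟩ ⊨ T` forces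
`K ⊆ K'`. -/
private def uniqT (K : Set U) : Set (Formula U) :=
  (Formula.atom '' K) ∪ ((fun a => fneg (.atom a)) '' Kᶜ)

private lemma sat_uniqT {L K : Set U} : SatTheory L (uniqT K) ↔ L = K := by
  constructor
  · intro h
    ext a
    constructor
    · intro haL
      by_contra haK
      exact (h _ (Or.inr ⟨a, haK, rfl⟩)) haL
    · intro haK
      exact h _ (Or.inl ⟨a, haK, rfl⟩)
  · rintro rfl φ hφ
    rcases hφ with ⟨a, ha, rfl⟩ | ⟨a, ha, rfl⟩
    · exact ha
    · exact fun h => ha h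

private lemma uniq_min {K' K : Set U} (h : SatHTTheory K' K (uniqT K)) : K ⊆ K' :=
  fun a ha => h _ (Or.inl ⟨a, ha, rfl⟩)

private lemma AS_uniq {G : Set (Formula U)} {K : Set U} :
    AS (G ∪ uniqT K) = {L | L = K ∧ SatTheory K G} := by
  ext L
  constructor
  · intro hL
    have hmod := satTheory_union.mp (AS_subset_models hL)
    have hLK : L = K := sat_uniqT.mp hmod.2
    exact ⟨hLK, hLK ▸ hmod.1⟩
  · rintro ⟨rfl, hG⟩
    refine ⟨satHTTheory_self.mpr (satTheory_union.mpr ⟨hG, sat_uniqT.mpr rfl⟩), ?_⟩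
    intro K' hK' hsat
    exact hK'.not_subset (uniq_min (satHTTheory_union.mp hsat).2)

end Stmt15Aux4

section Stmt15Aux5

variable {U : Type}

/-- Theory used to separate HT-models: classical models `⊆ {J}`, `⟨I,J⟩` is an HT-model,
and any HT-model `⟨K,J⟩` with `K ⊂ J` forces `K = I`. -/
private def htT (I J : Set U) : Set (Formula U) :=
  (Formula.atom '' I) ∪
  {φ | ∃ p ∈ J \ I, ∃ q ∈ J \ I, φ = Formula.imp (.atom p) (.atom q)} ∪
  ((fun a => fneg (fneg (.atom a))) '' J) ∪
  ((fun a => fneg (.atom a)) '' Jᶜ)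

private lemma htT_mod {I J L : Set U} (hIJ : I ⊆ J) (h : SatTheory L (htT I J)) :
    L = J := by
  ext a
  constructor
  · intro haL
    by_contra haJ
    exact (h _ (Or.inr ⟨a, haJ, rfl⟩)) haL
  · intro haJ
    have := h _ (Or.inl (Or.inr ⟨a, haJ, rfl⟩))
    show a ∈ L
    by_contra haL
    exact this fun h' => haL h'

private lemma htT_sat_J {I J : Set U} (hIJ : I ⊆ J) : SatTheory J (htT I J) := by
  rintro φ (((⟨a, ha, rfl⟩ | ⟨p, hp, q, hq, rfl⟩) | ⟨a, ha, rfl⟩) | ⟨a, ha, rfl⟩)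
  · exact hIJ ha
  · exact fun _ => hq.1
  · exact fun h => h ha
  · exact fun h => ha h

private lemma htT_ht_I {I J : Set U} (hIJ : I ⊆ J) : SatHTTheory I J (htT I J) := by
  rintro φ (((⟨a, ha, rfl⟩ | ⟨p, hp, q, hq, rfl⟩) | ⟨a, ha, rfl⟩) | ⟨a, ha, rfl⟩)
  · exact ha
  · exact ⟨fun _ => hq.1, Or.inl hp.2⟩
  · exact (satHT_nn hIJ).mpr ha
  · exact (satHT_fneg hIJ).mpr ha

private lemma htT_min {I J K : Set U} (hIJ : I ⊆ J) (hK : K ⊂ J)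
    (h : SatHTTheory K J (htT I J)) : K = I := by
  have hIK : I ⊆ K := fun a ha => h _ (Or.inl (Or.inl (Or.inl ⟨a, ha, rfl⟩)))
  obtain ⟨q0, hq0J, hq0K⟩ := Set.exists_of_ssubset hK
  have hq0I : q0 ∈ J \ I := ⟨hq0J, fun h' => hq0K (hIK h')⟩
  apply Set.Subset.antisymm _ hIK
  intro p hpK
  by_contra hpI
  have hpJI : p ∈ J \ I := ⟨hK.subset hpK, hpI⟩
  have := h _ (Or.inl (Or.inl (Or.inr ⟨p, hpJI, q0, hq0I, rfl⟩)))
  rcases this.2 with h' | h'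
  · exact h' hpK
  · exact hq0K h'

end Stmt15Aux5

section Stmt15Aux6

variable {U : Type}

/-- Theory with classical models `{I, J}` in which both `I` and `J` are stable,
assuming `c ∈ I` and `c ∉ J`. -/
private def pairT (c : U) (I J : Set U) : Set (Formula U) :=
  ((fun a => Formula.imp (fneg (fneg (.atom c))) (.atom a)) '' I) ∪
  ((fun a => Formula.imp (fneg (.atom c)) (.atom a)) '' J) ∪
  ((fun a => fneg (.atom a)) '' (I ∪ J)ᶜ) ∪
  {Formula.disj (.atom c) (fneg (.atom c))} ∪
  ((fun a => Formula.imp (.atom a) (fneg (.atom c))) '' (J \ I)) ∪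
  ((fun a => Formula.imp (.atom a) (fneg (fneg (.atom c)))) '' (I \ J))

private lemma pairT_mod {c : U} {I J K : Set U} (hcI : c ∈ I) (hcJ : c ∉ J)
    (hK : SatTheory K (pairT c I J)) : K = I ∨ K = J := by
  have hsub : K ⊆ I ∪ J := by
    intro a haK
    by_contra h'
    exact (hK _ (Or.inl (Or.inl (Or.inl (Or.inr ⟨a, h', rfl⟩))))) haK
  by_cases hcK : c ∈ K
  · left
    apply Set.Subset.antisymm
    · intro a haK
      by_contra haI
      have haJ : a ∈ J \ I := ⟨(hsub haK).resolve_left haI, haI⟩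
      exact (hK _ (Or.inl (Or.inr ⟨a, haJ, rfl⟩))) haK hcK
    · intro a haI
      exact hK _ (Or.inl (Or.inl (Or.inl (Or.inl (Or.inl ⟨a, haI, rfl⟩))))) (fun f => f hcK)
  · right
    apply Set.Subset.antisymm
    · intro a haK
      by_contra haJ
      have haI : a ∈ I \ J := ⟨(hsub haK).resolve_right haJ, haJ⟩
      exact (hK _ (Or.inr ⟨a, haI, rfl⟩)) haK hcK
    · intro a haJ
      exact hK _ (Or.inl (Or.inl (Or.inl (Or.inl (Or.inr ⟨a, haJ, rfl⟩))))) hcK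

private lemma pairT_sat_I {c : U} {I J : Set U} (hcI : c ∈ I) (hcJ : c ∉ J) :
    SatTheory I (pairT c I J) := by
  rintro φ (((((⟨a, ha, rfl⟩ | ⟨a, ha, rfl⟩) | ⟨a, ha, rfl⟩) | rfl) | ⟨a, ha, rfl⟩) | ⟨a, ha, rfl⟩)
  · exact fun _ => ha
  · exact fun hnc => (hnc hcI).elim
  · exact fun h => ha (Or.inl h)
  · exact Or.inl hcI
  · exact fun h => (ha.2 h).elim
  · exact fun _ f => f hcI

private lemma pairT_sat_J {c : U} {I J : Set U} (hcI : c ∈ I) (hcJ : c ∉ J) :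
    SatTheory J (pairT c I J) := by
  rintro φ (((((⟨a, ha, rfl⟩ | ⟨a, ha, rfl⟩) | ⟨a, ha, rfl⟩) | rfl) | ⟨a, ha, rfl⟩) | ⟨a, ha, rfl⟩)
  · exact fun f => (f hcJ).elim
  · exact fun _ => ha
  · exact fun h => ha (Or.inr h)
  · exact Or.inr hcJ
  · exact fun _ => hcJ
  · exact fun h => (ha.2 h).elim

private lemma pairT_min_I {c : U} {I J K : Set U} (hcI : c ∈ I) (hcJ : c ∉ J)
    (hK : K ⊂ I) (h : SatHTTheory K I (pairT c I J)) : False := by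
  have hKI : K ⊆ I := hK.subset
  have hcK : c ∈ K := by
    have := h _ (Or.inl (Or.inl (Or.inr rfl)))
    rcases this with h' | h'
    · exact h'
    · exact absurd ((satHT_fneg hKI).mp h') (not_not.mpr hcI)
  apply hK.not_subset
  intro a haI
  have := h _ (Or.inl (Or.inl (Or.inl (Or.inl (Or.inl ⟨a, haI, rfl⟩)))))
  rcases this.2 with h' | h'
  · exact absurd ((satHT_nn (φ := Formula.atom c) hKI).mpr hcI) h'
  · exact h'

private lemma pairT_min_J {c : U} {I J K : Set U} (hcI : c ∈ I) (hcJ : c ∉ J)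
    (hK : K ⊂ J) (h : SatHTTheory K J (pairT c I J)) : False := by
  have hKJ : K ⊆ J := hK.subset
  apply hK.not_subset
  intro a haJ
  have := h _ (Or.inl (Or.inl (Or.inl (Or.inl (Or.inr ⟨a, haJ, rfl⟩)))))
  rcases this.2 with h' | h'
  · exact absurd ((satHT_fneg (φ := Formula.atom c) hKJ).mpr hcJ) h'
  · exact h'

private lemma pair_theory {I J : Set U} (hne : I ≠ J) :
    ∃ T : Set (Formula U),
      (∀ K, SatTheory K T → K = I ∨ K = J) ∧ SatTheory I T ∧ SatTheory J T ∧
      (∀ K, K ⊂ I → ¬ SatHTTheory K I T) ∧ (∀ K, K ⊂ J → ¬ SatHTTheory K J T) := by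
  have hex : ∃ a, (a ∈ I ∧ a ∉ J) ∨ (a ∈ J ∧ a ∉ I) := by
    by_contra hcon
    push_neg at hcon
    exact hne (Set.ext fun a => by have := hcon a; tauto)
  obtain ⟨c, hc | hc⟩ := hex
  · exact ⟨pairT c I J, fun K hK => pairT_mod hc.1 hc.2 hK,
      pairT_sat_I hc.1 hc.2, pairT_sat_J hc.1 hc.2,
      fun K hK h => pairT_min_I hc.1 hc.2 hK h,
      fun K hK h => pairT_min_J hc.1 hc.2 hK h⟩
  · exact ⟨pairT c J I, fun K hK => Or.symm (pairT_mod hc.1 hc.2 hK),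
      pairT_sat_J hc.1 hc.2, pairT_sat_I hc.1 hc.2,
      fun K hK h => pairT_min_J hc.1 hc.2 hK h,
      fun K hK h => pairT_min_I hc.1 hc.2 hK h⟩

private lemma AS_pair {T : Set (Formula U)} {I J : Set U}
    (hmodT : ∀ K, SatTheory K T → K = I ∨ K = J)
    (hI : SatTheory I T) (hJ : SatTheory J T)
    (hminI : ∀ K, K ⊂ I → ¬ SatHTTheory K I T)
    (hminJ : ∀ K, K ⊂ J → ¬ SatHTTheory K J T)
    {G : Set (Formula U)} (hIG : SatTheory I G) (hJG : SatTheory J G) :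
    AS (G ∪ T) = ({I, J} : Set (Set U)) := by
  ext L
  constructor
  · intro hL
    have hmod := satTheory_union.mp (AS_subset_models hL)
    rcases hmodT L hmod.2 with rfl | rfl
    · exact Set.mem_insert _ _
    · exact Set.mem_insert_of_mem _ rfl
  · intro hL
    have hL' : L = I ∨ L = J := by
      rcases hL with rfl | hL
      · exact Or.inl rfl
      · exact Or.inr (Set.mem_singleton_iff.mp hL)
    rcases hL' with rfl | rfl
    · refine ⟨satHTTheory_self.mpr (satTheory_union.mpr ⟨hIG, hI⟩), ?_⟩
      intro K hK hsat
      exact hminI K hK (satHTTheory_union.mp hsat).2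
    · refine ⟨satHTTheory_self.mpr (satTheory_union.mpr ⟨hJG, hJ⟩), ?_⟩
      intro K hK hsat
      exact hminJ K hK (satHTTheory_union.mp hsat).2
end Stmt15Aux6

section Stmt15Aux7

variable {U : Type}

private lemma mod_sub {P Q : OptProblem U} (h : sgeqv Sem.aso 1 1 P Q) :
    models P.gen ⊆ models Q.gen := by
  intro K hK
  by_contra hKQ
  have hKP : SatTheory K P.gen := hK
  have hpref := h ⟨uniqT K, ∅, Set.finite_empty⟩ (fun r hr => absurd hr (Set.notMem_empty r))
  have hKin : K ∈ pref Sem.aso (P.union ⟨uniqT K, ∅, Set.finite_empty⟩) := by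
    refine ⟨?_, ?_⟩
    · show K ∈ AS (P.gen ∪ uniqT K)
      rw [AS_uniq]
      exact ⟨rfl, hKP⟩
    · rintro ⟨L, hL, hgt⟩
      have hL' : L = K ∧ SatTheory K P.gen := by
        have : L ∈ AS (P.gen ∪ uniqT K) := hL
        rwa [AS_uniq] at this
      exact gtSel_irrefl _ _ (hL'.1 ▸ hgt)
  have hKnotin : K ∉ pref Sem.aso (Q.union ⟨uniqT K, ∅, Set.finite_empty⟩) := by
    rintro ⟨hKas, -⟩
    have : SatTheory K (Q.gen ∪ uniqT K) := AS_subset_models hKas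
    exact hKQ ((satTheory_union.mp this).1)
  rw [hpref] at hKin
  exact hKnotin hKin

private lemma ht_sub {P Q : OptProblem U} (h : sgeqv Sem.aso 1 1 P Q)
    (hmod : models P.gen = models Q.gen) : HTmod P.gen ⊆ HTmod Q.gen := by
  rintro ⟨I, J⟩ ⟨hIJ, hsatP⟩
  refine ⟨hIJ, ?_⟩
  by_contra hsatQ
  have hJP : SatTheory J P.gen := fun φ hφ => satHT_persist hIJ φ (hsatP φ hφ)
  have hJQ : SatTheory J Q.gen := (Set.ext_iff.mp hmod J).mp hJP
  have hIJne : I ≠ J := by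
    rintro rfl
    exact hsatQ (satHTTheory_self.mpr hJQ)
  have hss : I ⊂ J := hIJ.ssubset_of_ne hIJne
  have hpref := h ⟨htT I J, ∅, Set.finite_empty⟩ (fun r hr => absurd hr (Set.notMem_empty r))
  have hASQ : J ∈ AS (Q.gen ∪ htT I J) := by
    refine ⟨satHTTheory_self.mpr (satTheory_union.mpr ⟨hJQ, htT_sat_J hIJ⟩), ?_⟩
    intro K hK hsat
    obtain ⟨hsatQ', hsatT⟩ := satHTTheory_union.mp hsat
    exact hsatQ ((htT_min hIJ hK hsatT) ▸ hsatQ')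
  have hJQpref : J ∈ pref Sem.aso (Q.union ⟨htT I J, ∅, Set.finite_empty⟩) := by
    refine ⟨hASQ, ?_⟩
    rintro ⟨L, hL, hgt⟩
    have hLJ : L = J := htT_mod hIJ
      ((satTheory_union.mp (AS_subset_models (show L ∈ AS (Q.gen ∪ htT I J) from hL))).2)
    exact gtSel_irrefl _ _ (hLJ ▸ hgt)
  have hJPpref : J ∉ pref Sem.aso (P.union ⟨htT I J, ∅, Set.finite_empty⟩) := by
    rintro ⟨hJas, -⟩
    exact (show J ∈ AS (P.gen ∪ htT I J) from hJas).2 I hss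
      (satHTTheory_union.mpr ⟨hsatP, htT_ht_I hIJ⟩)
  rw [hpref] at hJPpref
  exact hJPpref hJQpref

private lemma ge_sub {P Q : OptProblem U} (h : sgeqv Sem.aso 1 1 P Q)
    (hmod : models P.gen = models Q.gen)
    (hQ1 : ∀ r ∈ Q.sel, r.rank = 1)
    {I J : Set U} (hIP : SatTheory I P.gen) (hJP : SatTheory J P.gen)
    (hge : geSel P.sel I J) : geSel Q.sel I J := by
  by_contra hnge
  have hIQ : SatTheory I Q.gen := (Set.ext_iff.mp hmod I).mp hIP
  have hJQ : SatTheory J Q.gen := (Set.ext_iff.mp hmod J).mp hJP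
  have hne : I ≠ J := by
    rintro rfl
    exact hnge (Or.inl fun r _ => rfl)
  obtain ⟨T, hmodT, hIT, hJT, hminI, hminJ⟩ := pair_theory hne
  have hASP : AS (P.gen ∪ T) = ({I, J} : Set (Set U)) :=
    AS_pair hmodT hIT hJT hminI hminJ hIP hJP
  have hASQ : AS (Q.gen ∪ T) = ({I, J} : Set (Set U)) :=
    AS_pair hmodT hIT hJT hminI hminJ hIQ hJQ
  have hnsimQ : ¬ simSel Q.sel I J := fun hs => hnge (Or.inl hs)
  have hngtQ : ¬ gtSel Q.sel I J := fun hs => hnge (Or.inr hs)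
  have hIinP : I ∈ AS (P.gen ∪ T) := by rw [hASP]; exact Set.mem_insert _ _
  have hJinPA : J ∈ AS (P.gen ∪ T) := by rw [hASP]; exact Set.mem_insert_of_mem _ rfl
  have hIinQA : I ∈ AS (Q.gen ∪ T) := by rw [hASQ]; exact Set.mem_insert _ _
  have hJinQA : J ∈ AS (Q.gen ∪ T) := by rw [hASQ]; exact Set.mem_insert_of_mem _ rfl
  rcases hge with hsimP | hgtP
  · by_cases hgtQJI : gtSel Q.sel J I
    · have hpref := h ⟨T, ∅, Set.finite_empty⟩ (fun r hr => absurd hr (Set.notMem_empty r))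
      have hIinPref : I ∈ pref Sem.aso (P.union ⟨T, ∅, Set.finite_empty⟩) := by
        refine ⟨hIinP, ?_⟩
        rintro ⟨L, hL, hgt⟩
        have hL2 : L ∈ ({I, J} : Set (Set U)) := by
          have : L ∈ AS (P.gen ∪ T) := hL
          rwa [hASP] at this
        have hgt' : gtSel P.sel L I := by
          have : gtSel (P.sel ∪ ∅) L I := hgt
          rwa [Set.union_empty] at this
        rcases hL2 with rfl | hL2
        · exact gtSel_irrefl _ _ hgt'
        · rw [Set.mem_singleton_iff] at hL2; subst hL2
          exact simSel_not_gt (simSel_symm hsimP) hgt'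
      have hInotQ : I ∉ pref Sem.aso (Q.union ⟨T, ∅, Set.finite_empty⟩) := by
        rintro ⟨-, hnd⟩
        apply hnd
        refine ⟨J, hJinQA, ?_⟩
        show gtSel (Q.sel ∪ ∅) J I
        rw [Set.union_empty]
        exact hgtQJI
      rw [hpref] at hIinPref
      exact hInotQ hIinPref
    · obtain ⟨rs, hrs1, hdegI, hdegJ⟩ := exists_sep_rule hne
      have hpref := h ⟨T, {rs}, Set.finite_singleton rs⟩ ?hrank
      case hrank =>
        intro r hr
        rw [Set.mem_singleton_iff] at hr
        subst hr
        exact ⟨by simp [hrs1], by simp [hrs1]⟩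
      have hJnotP : J ∉ pref Sem.aso (P.union ⟨T, {rs}, Set.finite_singleton rs⟩) := by
        rintro ⟨-, hnd⟩
        apply hnd
        refine ⟨I, hIinP, ?_⟩
        show gtSel (P.sel ∪ {rs}) I J
        refine ⟨rs, Or.inr rfl, by rw [hdegI, hdegJ]; omega, ?_, ?_⟩
        · rintro r (hrP | hrR) _
          · exact (hsimP r hrP).le
          · rw [Set.mem_singleton_iff] at hrR; subst hrR
            rw [hdegI, hdegJ]; omega
        · rintro r (hrP | hrR) hlt
          · exact hsimP r hrP
          · rw [Set.mem_singleton_iff] at hrR; subst hrR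
            exact absurd hlt (lt_irrefl _)
      have hJinQ : J ∈ pref Sem.aso (Q.union ⟨T, {rs}, Set.finite_singleton rs⟩) := by
        refine ⟨hJinQA, ?_⟩
        rintro ⟨L, hL, hgt⟩
        have hL2 : L ∈ ({I, J} : Set (Set U)) := by
          have : L ∈ AS (Q.gen ∪ T) := hL
          rwa [hASQ] at this
        have hgt' : gtSel (Q.sel ∪ {rs}) L J := hgt
        rcases hL2 with rfl | hL2
        · obtain ⟨r', hr', hlt, hle, -⟩ := hgt'
          have hr'1 : r'.rank = 1 := by
            rcases hr' with h' | h'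
            · exact hQ1 r' h'
            · rw [Set.mem_singleton_iff] at h'; subst h'; exact hrs1
          have hwkQ : wkSel Q.sel L J := fun r hr =>
            hle r (Or.inl hr) ((hQ1 r hr).trans hr'1.symm)
          exact hngtQ ((gtSel_iff_wk hQ1).mpr ⟨hwkQ, hnsimQ⟩)
        · rw [Set.mem_singleton_iff] at hL2; subst hL2
          exact gtSel_irrefl _ _ hgt'
      rw [hpref] at hJnotP
      exact hJnotP hJinQ
  · have hpref := h ⟨T, ∅, Set.finite_empty⟩ (fun r hr => absurd hr (Set.notMem_empty r))
    have hJnotP : J ∉ pref Sem.aso (P.union ⟨T, ∅, Set.finite_empty⟩) := by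
      rintro ⟨-, hnd⟩
      apply hnd
      refine ⟨I, hIinP, ?_⟩
      show gtSel (P.sel ∪ ∅) I J
      rw [Set.union_empty]
      exact hgtP
    have hJinQ : J ∈ pref Sem.aso (Q.union ⟨T, ∅, Set.finite_empty⟩) := by
      refine ⟨hJinQA, ?_⟩
      rintro ⟨L, hL, hgt⟩
      have hL2 : L ∈ ({I, J} : Set (Set U)) := by
        have : L ∈ AS (Q.gen ∪ T) := hL
        rwa [hASQ] at this
      have hgt' : gtSel Q.sel L J := by
        have : gtSel (Q.sel ∪ ∅) L J := hgt
        rwa [Set.union_empty] at this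
      rcases hL2 with rfl | hL2
      · exact hngtQ hgt'
      · rw [Set.mem_singleton_iff] at hL2; subst hL2
        exact gtSel_irrefl _ _ hgt'
    rw [hpref] at hJnotP
    exact hJnotP hJinQ

end Stmt15Aux7

section Stmt15Aux8

variable {U : Type}

private lemma b_to_c {P Q : OptProblem U}
    (hP1 : ∀ r ∈ P.sel, r.rank = 1) (hQ1 : ∀ r ∈ Q.sel, r.rank = 1)
    (hb : sgeqv Sem.aso 1 1 P Q) :
    HTmod P.gen = HTmod Q.gen ∧
      restrictRel (geSel P.sel) (models P.gen) =
        restrictRel (geSel Q.sel) (models Q.gen) := by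
  have hbsym : sgeqv Sem.aso 1 1 Q P := fun R hr => (hb R hr).symm
  have hmod : models P.gen = models Q.gen :=
    Set.Subset.antisymm (mod_sub hb) (mod_sub hbsym)
  refine ⟨Set.Subset.antisymm (ht_sub hb hmod) (ht_sub hbsym hmod.symm), ?_⟩
  funext A B
  apply propext
  constructor
  · rintro ⟨hge, hA, hB⟩
    exact ⟨ge_sub hb hmod hQ1 hA hB hge, hmod ▸ hA, hmod ▸ hB⟩
  · rintro ⟨hge, hA, hB⟩
    exact ⟨ge_sub hbsym hmod.symm hP1 hA hB hge, hmod.symm ▸ hA, hmod.symm ▸ hB⟩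

private lemma c_to_a {P Q : OptProblem U}
    (hP1 : ∀ r ∈ P.sel, r.rank = 1) (hQ1 : ∀ r ∈ Q.sel, r.rank = 1)
    (hht : HTmod P.gen = HTmod Q.gen)
    (hge : restrictRel (geSel P.sel) (models P.gen) =
      restrictRel (geSel Q.sel) (models Q.gen)) :
    sgeqv Sem.aso 1 ⊤ P Q := by
  intro R _
  have hmod : models P.gen = models Q.gen := models_eq_of_HT hht
  have hAS : AS (P.gen ∪ R.gen) = AS (Q.gen ∪ R.gen) := AS_union_congr hht R.gen
  have key : ∀ A B : Set U, SatTheory A P.gen → SatTheory B P.gen →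
      (gtSel (P.sel ∪ R.sel) A B ↔ gtSel (Q.sel ∪ R.sel) A B) := by
    intro A B hA hB
    have hA' : A ∈ models Q.gen := hmod ▸ hA
    have hB' : B ∈ models Q.gen := hmod ▸ hB
    have hgeAB : geSel P.sel A B ↔ geSel Q.sel A B := by
      have h1 := iff_of_eq (congrFun (congrFun hge A) B)
      constructor
      · intro hg
        exact (h1.mp ⟨hg, hA, hB⟩).1
      · intro hg
        exact (h1.mpr ⟨hg, hA', hB'⟩).1
    have hgeBA : geSel P.sel B A ↔ geSel Q.sel B A := by
      have h1 := iff_of_eq (congrFun (congrFun hge B) A)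
      constructor
      · intro hg
        exact (h1.mp ⟨hg, hB, hA⟩).1
      · intro hg
        exact (h1.mpr ⟨hg, hB', hA'⟩).1
    have hsim : simSel P.sel A B ↔ simSel Q.sel A B := by
      rw [sim_iff_ge hP1, sim_iff_ge hQ1, hgeAB, hgeBA]
    have hwk : wkSel P.sel A B ↔ wkSel Q.sel A B := by
      rw [← geSel_iff_wk hP1, ← geSel_iff_wk hQ1]
      exact hgeAB
    exact ⟨gt_union_transfer hP1 hQ1 hsim hwk,
      gt_union_transfer hQ1 hP1 hsim.symm hwk.symm⟩
  ext K
  constructor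
  · rintro ⟨hK, hnd⟩
    have hK' : K ∈ AS (P.gen ∪ R.gen) := hK
    have hKP : SatTheory K P.gen := (satTheory_union.mp (AS_subset_models hK')).1
    refine ⟨show K ∈ AS (Q.gen ∪ R.gen) by rw [← hAS]; exact hK', ?_⟩
    rintro ⟨L, hL, hgt⟩
    have hL' : L ∈ AS (P.gen ∪ R.gen) := by
      rw [hAS]; exact hL
    have hLP : SatTheory L P.gen := (satTheory_union.mp (AS_subset_models hL')).1
    exact hnd ⟨L, hL', (key L K hLP hKP).mpr hgt⟩
  · rintro ⟨hK, hnd⟩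
    have hK' : K ∈ AS (P.gen ∪ R.gen) := by
      rw [hAS]; exact hK
    have hKP : SatTheory K P.gen := (satTheory_union.mp (AS_subset_models hK')).1
    refine ⟨hK', ?_⟩
    rintro ⟨L, hL, hgt⟩
    have hL' : L ∈ AS (P.gen ∪ R.gen) := hL
    have hLP : SatTheory L P.gen := (satTheory_union.mp (AS_subset_models hL')).1
    exact hnd ⟨L, show L ∈ AS (Q.gen ∪ R.gen) by rw [← hAS]; exact hL',
      (key L K hLP hKP).mp hgt⟩

end Stmt15Aux8


/-- Corollary 14: for simple ASO problems, `P ≡^s_g Q`, `P ≡^{s,=1}_g Q`,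
and `HT(P^g) = HT(Q^g) ∧ (≥^P)_{Mod(P^g)} = (≥^Q)_{Mod(Q^g)}` are equivalent. -/
theorem stmt15 {U : Type} [Countable U] (P Q : OptProblem U)
    (hP : ∀ r ∈ P.sel, r.rank = 1) (hQ : ∀ r ∈ Q.sel, r.rank = 1) :
    (sgeqv Sem.aso 1 ⊤ P Q ↔ sgeqv Sem.aso 1 (1 : ℕ∞) P Q) ∧
    (sgeqv Sem.aso 1 ⊤ P Q ↔
      (HTmod P.gen = HTmod Q.gen ∧
       restrictRel (geSel P.sel) (models P.gen) =
         restrictRel (geSel Q.sel) (models Q.gen))) := by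
  have hab : sgeqv Sem.aso 1 ⊤ P Q → sgeqv Sem.aso 1 (1 : ℕ∞) P Q :=
    fun ha R hR => ha R (fun r hr => ⟨(hR r hr).1, le_top⟩)
  have hbc : sgeqv Sem.aso 1 (1 : ℕ∞) P Q →
      HTmod P.gen = HTmod Q.gen ∧
        restrictRel (geSel P.sel) (models P.gen) =
          restrictRel (geSel Q.sel) (models Q.gen) :=
    fun hb => b_to_c hP hQ hb
  have hca : (HTmod P.gen = HTmod Q.gen ∧
      restrictRel (geSel P.sel) (models P.gen) =
        restrictRel (geSel Q.sel) (models Q.gen)) → sgeqv Sem.aso 1 ⊤ P Q :=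
    fun hc => c_to_a hP hQ hc.1 hc.2
  exact ⟨⟨hab, fun hb => hca (hbc hb)⟩, ⟨fun ha => hbc (hab ha), hca⟩⟩
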